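/- Suppose a formal power series ψ(x) = (2^{2-χ+K²}/(1-x²)^{χ_L})·[(1+x)^m + ε(1-x)^m] where ε = (-1)^{c₁K + χ}, m, χ, K², χ_L are integers, and let φ(x) = 2^{3-χ+K²}(1+x)^m/(1-x²)^{χ_L}. If one extracts only the coefficients of x^n with n ≡ -c₁² - 3χ (mod 4) (where c₁K ≡ c₁² mod 2), then the resulting sub-series of ψ and of φ agree: Σ_{n ≡ r (4)} ψ_n x^n = Σ_{n ≡ r (4)} φ_n x^n with r = -c₁² - 3χ mod 4. -/

import Mathlib

noncomputable def xL : LaurentSeries ℚ := (PowerSeries.X : PowerSeries ℚ)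

namespace Prop1Aux

open HahnSeries Finset

/-- The coefficient-twist `f(x) ↦ f(-x)` on Laurent series, as a bare function. -/
noncomputable def twistFun (f : LaurentSeries ℚ) : LaurentSeries ℚ where
  coeff n := (-1 : ℚ) ^ n * f.coeff n
  isPWO_support' := f.isPWO_support'.mono (by
    intro n hn
    simp only [Function.mem_support] at hn ⊢
    intro h; apply hn; rw [h, mul_zero])

@[simp] lemma twistFun_coeff (f : LaurentSeries ℚ) (n : ℤ) :
    (twistFun f).coeff n = (-1 : ℚ) ^ n * f.coeff n := rfl

lemma twistFun_support (f : LaurentSeries ℚ) : (twistFun f).support = f.support := by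
  ext n
  simp only [HahnSeries.mem_support, twistFun_coeff]
  constructor
  · intro hn h; apply hn; rw [h, mul_zero]
  · intro hn
    exact mul_ne_zero (zpow_ne_zero n (by norm_num)) hn

/-- The coefficient-twist `f(x) ↦ f(-x)` as a ring homomorphism. -/
noncomputable def twist : LaurentSeries ℚ →+* LaurentSeries ℚ where
  toFun := twistFun
  map_one' := by
    ext n
    by_cases h : n = 0 <;> simp [twistFun_coeff, HahnSeries.coeff_one, h]
  map_mul' f g := by
    ext n
    show (twistFun (f * g)).coeff n = (twistFun f * twistFun g).coeff n
    rw [twistFun_coeff, HahnSeries.coeff_mul, HahnSeries.coeff_mul, Finset.mul_sum]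
    have hAD : Finset.antidiagonal (twistFun f).isPWO_support (twistFun g).isPWO_support n
        = Finset.antidiagonal f.isPWO_support g.isPWO_support n := by
      ext ij
      simp only [Finset.mem_addAntidiagonal, twistFun_support]
    rw [hAD]
    refine Finset.sum_congr rfl fun ij hij => ?_
    rw [Finset.mem_addAntidiagonal] at hij
    rw [twistFun_coeff, twistFun_coeff, ← hij.2.2, zpow_add₀ (by norm_num : (-1:ℚ) ≠ 0)]
    ring
  map_zero' := by ext n; simp [twistFun_coeff]
  map_add' f g := by ext n; simp [twistFun_coeff]; ring

@[simp] lemma twist_coeff (f : LaurentSeries ℚ) (n : ℤ) :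
    (twist f).coeff n = (-1 : ℚ) ^ n * f.coeff n := rfl

lemma twist_xL : twist xL = -xL := by
  ext n
  rw [twist_coeff]
  have : xL = HahnSeries.single (1:ℤ) (1:ℚ) := PowerSeries.coe_X
  rw [this]
  by_cases h : n = 1
  · subst h; simp
  · simp [HahnSeries.coeff_single_of_ne h]

lemma twist_two : twist (2 : LaurentSeries ℚ) = 2 := by
  rw [show (2 : LaurentSeries ℚ) = 1 + 1 from one_add_one_eq_two.symm, map_add, map_one,
    one_add_one_eq_two]

end Prop1Aux

open Prop1Aux

theorem filtered_psi_eq_filtered_phi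
    (χ Ksq χL m c1sq c1K : ℤ) (hpar : c1K ≡ c1sq [ZMOD 2]) :
    ∀ n : ℤ, ((n : ZMod 4) = ((-c1sq - 3 * χ : ℤ) : ZMod 4)) →
      HahnSeries.coeff
        ((2 : LaurentSeries ℚ) ^ (2 - χ + Ksq) * (1 - xL ^ 2) ^ (-χL) *
          ((1 + xL) ^ m + (-1 : LaurentSeries ℚ) ^ (c1K + χ) * (1 - xL) ^ m)) n =
      HahnSeries.coeff
        ((2 : LaurentSeries ℚ) ^ (3 - χ + Ksq) * (1 - xL ^ 2) ^ (-χL) * (1 + xL) ^ m) n := by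
  intro n hn
  set A : LaurentSeries ℚ := (2 : LaurentSeries ℚ) ^ (2 - χ + Ksq) * (1 - xL ^ 2) ^ (-χL) with hA
  have h2 : (2 : LaurentSeries ℚ) ≠ 0 := by
    intro h
    have := congrArg (fun f : LaurentSeries ℚ => f.coeff 0) h
    rw [show (2 : LaurentSeries ℚ) = 1 + 1 from one_add_one_eq_two.symm] at this
    simp [HahnSeries.coeff_add, HahnSeries.coeff_one] at this
  have hφ2 : (2 : LaurentSeries ℚ) ^ (3 - χ + Ksq) =
      2 * (2 : LaurentSeries ℚ) ^ (2 - χ + Ksq) := by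
    rw [show (3 - χ + Ksq) = 1 + (2 - χ + Ksq) by ring, zpow_add₀ h2, zpow_one]
  -- twist identities
  have hT : twist (A * (1 + xL) ^ m) = A * (1 - xL) ^ m := by
    rw [map_mul, hA, map_mul, map_zpow₀, map_zpow₀, twist_two, map_sub, map_one, map_pow,
      twist_xL, map_zpow₀, map_add, map_one, twist_xL]
    ring_nf
  have hQcoeff : (A * (1 - xL) ^ m).coeff n = (-1 : ℚ) ^ n * (A * (1 + xL) ^ m).coeff n := by
    rw [← hT, twist_coeff]
  -- parity
  have hmod : Even (n + (c1K + χ)) := by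
    have h4 : n ≡ -c1sq - 3 * χ [ZMOD 4] := (ZMod.intCast_eq_intCast_iff _ _ _).mp hn
    have h4' : n % 4 = (-c1sq - 3 * χ) % 4 := h4
    have hp' : c1K % 2 = c1sq % 2 := hpar
    rw [Int.even_iff]
    omega
  rcases Int.even_or_odd n with he | ho
  · have hEe : Even (c1K + χ) := (Int.even_add.mp hmod).mp he
    obtain ⟨k, hk⟩ := hEe
    have hne1 : (-1 : LaurentSeries ℚ) ≠ 0 := neg_ne_zero.mpr one_ne_zero
    have hε : (-1 : LaurentSeries ℚ) ^ (c1K + χ) = 1 := by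
      have h11 : (-1 : LaurentSeries ℚ) * -1 = 1 := by ring
      rw [hk, zpow_add₀ hne1, ← mul_zpow, h11, one_zpow]
    have hsign : ((-1 : ℚ) ^ n) = 1 := he.neg_one_zpow
    rw [hε, hφ2]
    have e1 : A * ((1 + xL) ^ m + 1 * (1 - xL) ^ m)
        = A * (1 + xL) ^ m + A * (1 - xL) ^ m := by ring
    have e2 : 2 * (2 : LaurentSeries ℚ) ^ (2 - χ + Ksq) * (1 - xL ^ 2) ^ (-χL) * (1 + xL) ^ m
        = A * (1 + xL) ^ m + A * (1 + xL) ^ m := by rw [hA]; ring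
    rw [e1, e2, HahnSeries.coeff_add, HahnSeries.coeff_add, hQcoeff, hsign, one_mul]
  · have hOe : Odd (c1K + χ) := by
      rcases Int.even_or_odd (c1K + χ) with h | h
      · exact absurd ((Int.even_add.mp hmod).mpr h) (Int.not_even_iff_odd.mpr ho)
      · exact h
    obtain ⟨k, hk⟩ := hOe
    have hne1 : (-1 : LaurentSeries ℚ) ≠ 0 := neg_ne_zero.mpr one_ne_zero
    have hε : (-1 : LaurentSeries ℚ) ^ (c1K + χ) = -1 := by
      have h11 : (-1 : LaurentSeries ℚ) * -1 = 1 := by ring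
      rw [hk, zpow_add₀ hne1, zpow_one, two_mul, zpow_add₀ hne1, ← mul_zpow, h11,
        one_zpow, one_mul]
    have hsign : ((-1 : ℚ) ^ n) = -1 := ho.neg_one_zpow
    rw [hε, hφ2]
    have e1 : A * ((1 + xL) ^ m + (-1) * (1 - xL) ^ m)
        = A * (1 + xL) ^ m - A * (1 - xL) ^ m := by ring
    have e2 : 2 * (2 : LaurentSeries ℚ) ^ (2 - χ + Ksq) * (1 - xL ^ 2) ^ (-χL) * (1 + xL) ^ m
        = A * (1 + xL) ^ m + A * (1 + xL) ^ m := by rw [hA]; ring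
    rw [e1, e2, HahnSeries.coeff_sub, HahnSeries.coeff_add, hQcoeff, hsign]
    ring
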